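/- Let Σ be the complex plane punctured at q−1 distinct points α₁,…,α_{q−1} with g(z) = z and ω = dz/∏_{i=1}^{q−1}(z−α_i). If q ≥ m+3 then there exists a divergent curve in Σ of finite length with respect to ds² = (1+|g|²)^m |ω|²; i.e., the metric is not complete. -/

import Mathlib

open MeasureTheory Set

/-- On `Σ = ℂ \ {α₁,…,α_{q−1}}` with `ds² = (1+|z|²)^m |dz|²/∏|z−αᵢ|²`,
if `q ≥ m+3` then there is a divergent curve of finite length, i.e. the metric is
not complete. -/
theorem incomplete_model_metric
    (m q : ℕ) (hm : 1 ≤ m) (hq : m + 3 ≤ q)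
    (α : Fin (q - 1) → ℂ) (hα : Function.Injective α) :
    ∃ γ : ℝ → ℂ,
      (∀ t ∈ Set.Ico (0 : ℝ) 1, DifferentiableAt ℝ γ t) ∧
      (∀ t ∈ Set.Ico (0 : ℝ) 1, γ t ∉ Set.range α) ∧
      (∀ K : Set ℂ, IsCompact K → K ⊆ {z : ℂ | z ∉ Set.range α} →
        ∃ t₀ ∈ Set.Ico (0 : ℝ) 1, ∀ t ∈ Set.Ico t₀ 1, γ t ∉ K) ∧
      (∫⁻ t in Set.Ico (0 : ℝ) 1,
        ENNReal.ofReal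
          ((1 + ‖γ t‖ ^ 2) ^ ((m : ℝ) / 2) / (∏ i, ‖γ t - α i‖) * ‖deriv γ t‖)) < ⊤ := by
  obtain ⟨n, hn⟩ : ∃ n, q = m + 3 + n := ⟨q - (m + 3), by omega⟩
  have hq1 : q - 1 = m + 2 + n := by omega
  obtain ⟨A, hA0, hAle⟩ : ∃ A : ℝ, 0 ≤ A ∧ ∀ i, ‖α i‖ ≤ A :=
    ⟨∑ i, ‖α i‖, Finset.sum_nonneg fun i _ => norm_nonneg _, fun i =>
      Finset.single_le_sum (f := fun i => ‖α i‖) (fun j _ => norm_nonneg _) (Finset.mem_univ i)⟩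
  obtain ⟨R, hR2, hR, hR0⟩ : ∃ R : ℝ, 2 ≤ R ∧ R = 2 * A + 2 ∧ 0 < R :=
    ⟨2 * A + 2, by linarith, rfl, by linarith⟩
  obtain ⟨γ, hγ⟩ : ∃ γ : ℝ → ℂ, γ = fun t => ((R / (1 - t) : ℝ) : ℂ) := ⟨_, rfl⟩
  -- basic facts for t ∈ [0,1)
  have hs : ∀ t ∈ Ico (0:ℝ) 1, 0 < 1 - t := fun t ht => by
    have := ht.2; linarith
  have hderiv : ∀ t ∈ Ico (0:ℝ) 1, HasDerivAt γ ((R / (1-t)^2 : ℝ) : ℂ) t := by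
    intro t ht
    rw [hγ]
    have h1 : HasDerivAt (fun t : ℝ => 1 - t) (-1) t := (hasDerivAt_id t).const_sub 1
    have h2 := (h1.inv (ne_of_gt (hs t ht))).const_mul R
    have h3 : HasDerivAt (fun t : ℝ => R / (1 - t)) (R / (1-t)^2) t := by
      simp only [div_eq_mul_inv]
      exact h2.congr_deriv (by ring)
    exact h3.ofReal_comp
  have hnorm : ∀ t ∈ Ico (0:ℝ) 1, ‖γ t‖ = R / (1 - t) := by
    intro t ht
    have := hs t ht
    rw [hγ]
    simp only [Complex.norm_real, Real.norm_eq_abs]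
    exact abs_of_pos (div_pos hR0 this)
  have hrR : ∀ t ∈ Ico (0:ℝ) 1, R ≤ R / (1 - t) := by
    intro t ht
    rw [le_div_iff₀ (hs t ht)]
    nlinarith [ht.1, ht.2]
  have hnotin : ∀ t ∈ Ico (0:ℝ) 1, γ t ∉ Set.range α := by
    rintro t ht ⟨i, hi⟩
    have h1 : ‖α i‖ = R / (1 - t) := by rw [hi]; exact hnorm t ht
    have h2 := hAle i
    have h3 := hrR t ht
    linarith [hR]
  refine ⟨γ, fun t ht => (hderiv t ht).differentiableAt, hnotin, ?_, ?_⟩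
  · intro K hK hKs
    obtain ⟨M, hM⟩ := hK.isBounded.subset_closedBall 0
    set M' : ℝ := max M 0 with hM'
    have hM'0 : 0 ≤ M' := le_max_right _ _
    refine ⟨max 0 (1 - R / (M' + 1)), ⟨le_max_left _ _, ?_⟩, ?_⟩
    · apply max_lt one_pos
      have : 0 < R / (M' + 1) := by positivity
      linarith
    · intro t ht
      have ht1 : t < 1 := ht.2
      have ht0 : 0 ≤ t := le_trans (le_max_left _ _) ht.1
      have htI : t ∈ Ico (0:ℝ) 1 := ⟨ht0, ht1⟩
      have h4 : 1 - t ≤ R / (M' + 1) := by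
        have := le_trans (le_max_right _ _) ht.1
        linarith
      have h5 : M' + 1 ≤ R / (1 - t) := by
        rw [le_div_iff₀ (hs t htI)]
        calc (M' + 1) * (1 - t) ≤ (M' + 1) * (R / (M' + 1)) := by
              apply mul_le_mul_of_nonneg_left h4 (by linarith)
          _ = R := by field_simp
      intro hmem
      have h6 := hM hmem
      rw [Metric.mem_closedBall, dist_zero_right] at h6
      have h7 := hnorm t htI
      linarith [le_max_left M 0]
  · have hbound : ∀ t ∈ Ico (0:ℝ) 1,
        (1 + ‖γ t‖ ^ 2) ^ ((m : ℝ) / 2) / (∏ i, ‖γ t - α i‖) * ‖deriv γ t‖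
          ≤ 2 ^ (m + (m + 2 + n)) / R := by
      intro t ht
      set r : ℝ := R / (1 - t) with hr
      have hst := hs t ht
      have hrpos : 0 < r := div_pos hR0 hst
      have hRr : R ≤ r := hrR t ht
      have hr1 : (1:ℝ) ≤ r := by linarith
      have hγn : ‖γ t‖ = r := hnorm t ht
      have hD : ‖deriv γ t‖ = r ^ 2 / R := by
        rw [(hderiv t ht).deriv, Complex.norm_real, Real.norm_eq_abs,
          abs_of_pos (by positivity), hr]
        field_simp
      have hprodi : ∀ i, r / 2 ≤ ‖γ t - α i‖ := by
        intro i
        have h1 := norm_sub_norm_le (γ t) (α i)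
        have h2 := hAle i
        rw [hγn] at h1
        linarith [hR]
      have hP : (r/2) ^ (m+2+n) ≤ ∏ i, ‖γ t - α i‖ := by
        calc (r/2) ^ (m+2+n) = ∏ _i : Fin (q-1), (r/2) := by
              rw [Finset.prod_const, Finset.card_univ, Fintype.card_fin, hq1]
          _ ≤ ∏ i, ‖γ t - α i‖ :=
              Finset.prod_le_prod (fun i _ => by positivity) (fun i _ => hprodi i)
      have hPpos : (0:ℝ) < (r/2) ^ (m+2+n) := by positivity
      have hN : (1 + ‖γ t‖ ^ 2) ^ ((m : ℝ) / 2) ≤ (2*r) ^ m := by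
        rw [hγn]
        have h1 : (1:ℝ) + r^2 ≤ (2*r)^2 := by nlinarith
        calc (1 + r^2) ^ ((m:ℝ)/2) ≤ ((2*r)^2) ^ ((m:ℝ)/2) :=
              Real.rpow_le_rpow (by positivity) h1 (by positivity)
          _ = (2*r) ^ m := by
              rw [← Real.rpow_natCast (2*r) 2, ← Real.rpow_mul (by positivity)]
              norm_num
              rw [show (2:ℝ) * ((m:ℝ)/2) = (m:ℝ) by ring, Real.rpow_natCast]
      calc (1 + ‖γ t‖ ^ 2) ^ ((m : ℝ) / 2) / (∏ i, ‖γ t - α i‖) * ‖deriv γ t‖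
          ≤ (2*r)^m / ((r/2)^(m+2+n)) * (r^2/R) := by
            rw [hD]
            exact mul_le_mul_of_nonneg_right
              (div_le_div₀ (by positivity) hN hPpos hP) (by positivity)
        _ = (2 ^ (m + (m + 2 + n)) / R) * (r^(m+2) / r^(m+2+n)) := by
            rw [div_pow, mul_pow]
            field_simp
            ring
        _ ≤ (2 ^ (m + (m + 2 + n)) / R) * 1 := by
            gcongr
            exact div_le_one_of_le₀ (pow_le_pow_right₀ hr1 (by omega)) (by positivity)
        _ = 2 ^ (m + (m + 2 + n)) / R := mul_one _
    refine lt_of_le_of_lt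
      (setLIntegral_mono measurable_const fun t ht => ENNReal.ofReal_le_ofReal (hbound t ht)) ?_
    rw [setLIntegral_const, Real.volume_Ico]
    exact ENNReal.mul_lt_top ENNReal.ofReal_lt_top (by simp)
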